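/- For every s ∈ [0,1], the 1-form α_s = (1-s)(dx - y dθ) + s((1-y²) dx + xy dy - y dθ) is a contact form on the solid torus D² × S¹, where D² = {(x,y) : x² + y² ≤ 1}. -/

import Mathlib

noncomputable def pd (f : (Fin 3 → ℝ) → ℝ) (i : Fin 3) (p : Fin 3 → ℝ) : ℝ :=
  fderiv ℝ f p (Pi.single i 1)

noncomputable def contactCoeff (a : (Fin 3 → ℝ) → Fin 3 → ℝ) (p : Fin 3 → ℝ) : ℝ :=
  a p 0 * (pd (fun q => a q 2) 1 p - pd (fun q => a q 1) 2 p)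
  - a p 1 * (pd (fun q => a q 2) 0 p - pd (fun q => a q 0) 2 p)
  + a p 2 * (pd (fun q => a q 1) 0 p - pd (fun q => a q 0) 1 p)

lemma pd_eq {f : (Fin 3 → ℝ) → ℝ} {D : (Fin 3 → ℝ) →L[ℝ] ℝ} {p : Fin 3 → ℝ}
    (h : HasFDerivAt f D p) (i : Fin 3) : pd f i p = D (Pi.single i 1) := by
  rw [pd, h.fderiv]

lemma hproj (i : Fin 3) (p : Fin 3 → ℝ) :
    HasFDerivAt (fun q : Fin 3 → ℝ => q i)
      (ContinuousLinearMap.proj i : (Fin 3 → ℝ) →L[ℝ] ℝ) p :=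
  (ContinuousLinearMap.proj i : (Fin 3 → ℝ) →L[ℝ] ℝ).hasFDerivAt

/-- For every `s ∈ [0,1]`, the 1-form
`αₛ = (1-s)(dx - y dθ) + s((1-y²) dx + xy dy - y dθ)`
is a contact form on the solid torus `D² × S¹` (coordinates `(x,y,θ)`, with
`x² + y² ≤ 1` and coefficients independent of — hence periodic in — `θ`). -/
theorem interpolated_forms_are_contact :
    ∀ s ∈ Set.Icc (0:ℝ) 1, ∀ p : Fin 3 → ℝ, (p 0)^2 + (p 1)^2 ≤ 1 →
      contactCoeff
        (fun q => ![(1 - s) + s * (1 - (q 1)^2), s * q 0 * q 1, -q 1]) p ≠ 0 := by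
  intro s hs p _
  have hA : HasFDerivAt (fun q : Fin 3 → ℝ => (1 - s) + s * (1 - q 1 * q 1)) _ p :=
    (hasFDerivAt_const (1 - s) p).add
      ((hasFDerivAt_const s p).mul ((hasFDerivAt_const (1:ℝ) p).sub ((hproj 1 p).mul (hproj 1 p))))
  have hB : HasFDerivAt (fun q : Fin 3 → ℝ => s * q 0 * q 1) _ p :=
    ((hasFDerivAt_const s p).mul (hproj 0 p)).mul (hproj 1 p)
  have hC : HasFDerivAt (fun q : Fin 3 → ℝ => -q 1) _ p := (hproj 1 p).neg
  simp only [contactCoeff, Matrix.cons_val_zero, Matrix.cons_val_one, Matrix.head_cons,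
    Matrix.cons_val_two, Matrix.tail_cons]
  simp_rw [pow_two]
  rw [pd_eq hC 1, pd_eq hC 0, pd_eq hB 2, pd_eq hB 0, pd_eq hA 2, pd_eq hA 1]
  simp only [ContinuousLinearMap.add_apply, ContinuousLinearMap.smul_apply,
    ContinuousLinearMap.neg_apply, ContinuousLinearMap.sub_apply, ContinuousLinearMap.coe_smul', Pi.smul_apply,
    ContinuousLinearMap.zero_apply, ContinuousLinearMap.proj_apply,
    Pi.single_eq_same, smul_eq_mul]
  simp only [Pi.single_apply, Fin.isValue, if_true, show ((1:Fin 3) = 2) = False by simp, show ((1:Fin 3) = 0) = False by simp, Pi.mul_apply, show ((0:Fin 3) = 1) = False by simp, show ((0:Fin 3) = 2) = False by simp, if_false, ite_self]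
  obtain ⟨hs0, hs1⟩ := hs
  nlinarith [sq_nonneg (p 1), mul_nonneg hs0 (sq_nonneg (p 1))]
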